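/- Let X be a measure space with the doubling property, let M be the Hardy–Littlewood maximal operator, and f ∈ L^1 + L^∞. Then (Mf)^*(t) ≤ C f^{**}(t) for all t > 0, where f^* is the decreasing rearrangement and f^{**}(t) = (1/t)∫₀^t f^*(s) ds, with C depending only on the weak-(1,1) and L^∞ bounds of M. -/

import Mathlib

open MeasureTheory Metric Set
open scoped ENNReal NNReal

/-- The decreasing rearrangement of an `ℝ≥0∞`-valued function. -/
noncomputable def decRearrangementE {X : Type} [MeasurableSpace X] (μ : Measure X)
    (f : X → ℝ≥0∞) (t : ℝ) : ℝ≥0∞ :=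
  sInf {l : ℝ≥0∞ | μ {x | l < f x} ≤ ENNReal.ofReal t}

/-- The decreasing rearrangement `f^*(t) = inf { λ : μ({|f| > λ}) ≤ t }`. -/
noncomputable def decRearrangement {X : Type} [MeasurableSpace X] (μ : Measure X)
    (f : X → ℝ) (t : ℝ) : ℝ≥0∞ :=
  decRearrangementE μ (fun x => (‖f x‖₊ : ℝ≥0∞)) t

/-- The maximal decreasing rearrangement `f^{**}(t) = (1/t) ∫₀^t f^*(s) ds`. -/
noncomputable def maxDecRearrangement {X : Type} [MeasurableSpace X] (μ : Measure X)
    (f : X → ℝ) (t : ℝ) : ℝ≥0∞ :=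
  (ENNReal.ofReal t)⁻¹ * ∫⁻ s in Set.Ioo (0 : ℝ) t, decRearrangement μ f s

/-- The (centred) Hardy–Littlewood maximal operator over balls. -/
noncomputable def hlMaximal {X : Type} [MetricSpace X] [MeasurableSpace X]
    (μ : Measure X) (f : X → ℝ) (x : X) : ℝ≥0∞ :=
  ⨆ (r : ℝ) (_ : 0 < r),
    (∫⁻ y in Metric.ball x r, (‖f y‖₊ : ℝ≥0∞) ∂μ) / μ (Metric.ball x r)

lemma auxIndicatorIntegral (c : ℝ≥0∞) :
    ∫⁻ l in Set.Ioi (0:ℝ), (if ENNReal.ofReal l < c then (1:ℝ≥0∞) else 0) = c := by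
  have hms : MeasurableSet {l : ℝ | ENNReal.ofReal l < c} :=
    measurableSet_lt ENNReal.measurable_ofReal measurable_const
  have h1 : (fun l : ℝ => if ENNReal.ofReal l < c then (1:ℝ≥0∞) else 0)
      = Set.indicator {l : ℝ | ENNReal.ofReal l < c} (fun _ => (1:ℝ≥0∞)) := by
    funext l; simp [Set.indicator_apply]
  rw [h1, lintegral_indicator hms, setLIntegral_one, Measure.restrict_apply hms]
  rcases eq_or_ne c ⊤ with rfl | hc
  · have : {l : ℝ | ENNReal.ofReal l < ⊤} = univ := by
      ext l; simp [ENNReal.ofReal_lt_top]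
    rw [this, Set.univ_inter, Real.volume_Ioi]
  · have : {l : ℝ | ENNReal.ofReal l < c} ∩ Ioi 0 = Ioo 0 c.toReal := by
      ext l
      simp only [mem_inter_iff, mem_setOf_eq, mem_Ioi, mem_Ioo]
      constructor
      · rintro ⟨h1, h2⟩
        exact ⟨h2, (ENNReal.ofReal_lt_iff_lt_toReal h2.le hc).mp h1⟩
      · rintro ⟨h1, h2⟩
        exact ⟨(ENNReal.ofReal_lt_iff_lt_toReal h1.le hc).mpr h2, h1⟩
    rw [this, Real.volume_Ioo, sub_zero, ENNReal.ofReal_toReal hc]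

lemma auxWeak11 {X : Type} [MetricSpace X] [MeasurableSpace X] [BorelSpace X] (μ : Measure X)
    (K : ℝ≥0∞) (hK1 : 1 ≤ K)
    (hd : ∀ (x : X) (r : ℝ), 0 < r → μ (ball x (2 * r)) ≤ K * μ (ball x r))
    (F : X → ℝ≥0∞) (hF : Measurable F) (lam : ℝ≥0∞) (hlam : 0 < lam) :
    μ {x | lam < ⨆ (r : ℝ) (_ : 0 < r), (∫⁻ y in ball x r, F y ∂μ) / μ (ball x r)}
      ≤ K ^ 3 * (∫⁻ y, F y ∂μ) / lam := by
  classical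
  set Mx : X → ℝ≥0∞ := fun x => ⨆ (r : ℝ) (_ : 0 < r), (∫⁻ y in ball x r, F y ∂μ) / μ (ball x r)
    with hMx
  rcases eq_or_ne lam ⊤ with rfl | hlt
  · have : {x | (⊤:ℝ≥0∞) < Mx x} = ∅ := by
      ext x; simp [not_top_lt]
    rw [this]; simp
  set I := ∫⁻ y, F y ∂μ with hI
  rcases eq_or_ne I ⊤ with hItop | hItop
  · rw [hItop, ENNReal.mul_top (by positivity), ENNReal.top_div_of_ne_top hlt]
    exact le_top
  -- every point of the superlevel set has a good ball
  have key : ∀ x ∈ {x | lam < Mx x}, ∃ r : ℝ, 0 < r ∧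
      lam * μ (ball x r) < ∫⁻ y in ball x r, F y ∂μ := by
    intro x hx
    simp only [mem_setOf_eq, hMx, lt_iSup_iff] at hx
    obtain ⟨r, hr, hx⟩ := hx
    refine ⟨r, hr, ?_⟩
    rcases eq_or_ne (μ (ball x r)) 0 with h0 | h0
    · rw [setLIntegral_measure_zero _ _ h0, ENNReal.zero_div] at hx
      exact absurd hx (by simp)
    rcases eq_or_ne (μ (ball x r)) ⊤ with hT | hT
    · rw [hT, ENNReal.div_top] at hx
      exact absurd hx (by simp)
    · exact (ENNReal.lt_div_iff_mul_lt (Or.inl h0) (Or.inl hT)).mp hx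
  set En : ℕ → Set X := fun n => {x | ∃ r : ℝ, 0 < r ∧ r ≤ n + 1 ∧
      lam * μ (ball x r) < ∫⁻ y in ball x r, F y ∂μ} with hEn
  have hmono : Monotone En := by
    intro m n hmn x hx
    obtain ⟨r, h1, h2, h3⟩ := hx
    exact ⟨r, h1, h2.trans (by exact_mod_cast add_le_add_left (Nat.cast_le.mpr hmn) 1), h3⟩
  have hEsub : {x | lam < Mx x} ⊆ ⋃ n, En n := by
    intro x hx
    obtain ⟨r, hr, hlt'⟩ := key x hx
    obtain ⟨n, hn⟩ := exists_nat_ge r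
    exact mem_iUnion.mpr ⟨n, r, hr, hn.trans (by linarith), hlt'⟩
  refine le_trans (measure_mono hEsub) ?_
  rw [Monotone.measure_iUnion hmono]
  refine iSup_le fun n => ?_
  -- choose radii
  have hch : ∀ a ∈ En n, ∃ r : ℝ, 0 < r ∧ r ≤ n + 1 ∧
      lam * μ (ball a r) < ∫⁻ y in ball a r, F y ∂μ := fun a ha => ha
  choose! rad h1 h2 h3 using hch
  obtain ⟨u, hu_sub, hu_disj, hu_cov⟩ :=
    Vitali.exists_disjoint_subfamily_covering_enlargement_closedBall (En n) id rad (n + 1)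
      (fun a ha => h2 a ha) 4 (by norm_num)
  -- positivity of ball measures on u
  have hpos : ∀ b ∈ u, 0 < μ (ball b (rad b)) := by
    intro b hb
    rcases eq_or_ne (μ (ball b (rad b))) 0 with h0 | h0
    · exfalso
      have := h3 b (hu_sub hb)
      rw [h0, mul_zero, setLIntegral_measure_zero _ _ h0] at this
      exact lt_irrefl 0 this
    · exact pos_iff_ne_zero.mpr h0
  -- finite sums are bounded
  have hfin : ∀ s : Finset X, ↑s ⊆ u → ∑ b ∈ s, lam * μ (ball b (rad b)) ≤ I := by
    intro s hs
    have hdisj : Set.PairwiseDisjoint (↑s : Set X) (fun b => ball b (rad b)) := by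
      intro b hb c hc hbc
      exact Disjoint.mono (ball_subset_closedBall) (ball_subset_closedBall)
        (hu_disj (hs hb) (hs hc) hbc)
    calc ∑ b ∈ s, lam * μ (ball b (rad b))
        ≤ ∑ b ∈ s, ∫⁻ y in ball b (rad b), F y ∂μ := by
          refine Finset.sum_le_sum fun b hb => (h3 b (hu_sub (hs hb))).le
      _ = ∫⁻ y in ⋃ b ∈ s, ball b (rad b), F y ∂μ :=
          (lintegral_biUnion_finset hdisj (fun b _ => measurableSet_ball) F).symm
      _ ≤ I := by
          rw [hI]
          exact setLIntegral_le_lintegral _ _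
  have htsum : ∑' b : u, μ (ball (b : X) (rad b)) ≤ I / lam := by
    rw [ENNReal.le_div_iff_mul_le (Or.inl hlam.ne') (Or.inl hlt), mul_comm,
      ← ENNReal.tsum_mul_left]
    rw [ENNReal.tsum_eq_iSup_sum]
    refine iSup_le fun s => ?_
    have : ∑ b ∈ s, lam * μ (ball (b : X) (rad b))
        = ∑ b ∈ s.image (Subtype.val), lam * μ (ball b (rad b)) := by
      rw [Finset.sum_image (fun a _ b _ h => Subtype.coe_injective h)]
    rw [this]
    refine hfin _ ?_
    intro b hb
    simp only [Finset.coe_image, Set.mem_image] at hb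
    obtain ⟨⟨b', hb'⟩, _, rfl⟩ := hb
    exact hb'
  have hcnt : u.Countable := by
    have hne : (∑' b : u, μ (ball (b : X) (rad b))) ≠ ⊤ :=
      (htsum.trans_lt (ENNReal.div_lt_top hItop hlam.ne')).ne
    have := Summable.countable_support_ennreal hne
    have hsupp : (Function.support fun b : u => μ (ball (b : X) (rad b))) = Set.univ := by
      ext b; simp [Function.mem_support, (hpos b b.2).ne']
    rw [hsupp] at this
    haveI : Countable u := Set.countable_univ_iff.mp this
    exact Set.countable_coe_iff.mp inferInstance
  -- cover
  have hcov : En n ⊆ ⋃ b ∈ u, closedBall b (4 * rad b) := by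
    intro a ha
    obtain ⟨b, hb, hsub'⟩ := hu_cov a ha
    exact mem_biUnion hb (hsub' (mem_closedBall_self (h1 a ha).le))
  calc μ (En n) ≤ μ (⋃ b ∈ u, closedBall b (4 * rad b)) := measure_mono hcov
    _ ≤ ∑' b : u, μ (closedBall (b : X) (4 * rad b)) := measure_biUnion_le μ hcnt _
    _ ≤ ∑' b : u, K ^ 3 * μ (ball (b : X) (rad b)) := by
        refine ENNReal.tsum_le_tsum fun b => ?_
        have hrb : 0 < rad b := h1 b (hu_sub b.2)
        have hsub8 : closedBall (b : X) (4 * rad b) ⊆ ball (b : X) (2 * (2 * (2 * rad b)))  := by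
          apply closedBall_subset_ball; nlinarith
        calc μ (closedBall (b : X) (4 * rad b)) ≤ μ (ball (b : X) (2 * (2 * (2 * rad b)))) :=
              measure_mono hsub8
          _ ≤ K * μ (ball (b : X) (2 * (2 * rad b))) := hd _ _ (by positivity)
          _ ≤ K * (K * μ (ball (b : X) (2 * rad b))) :=
              mul_le_mul_right (hd _ _ (by positivity)) K
          _ ≤ K * (K * (K * μ (ball (b : X) (rad b)))) :=
              mul_le_mul_right (mul_le_mul_right (hd _ _ hrb) K) K
          _ = K ^ 3 * μ (ball (b : X) (rad b)) := by ring
    _ = K ^ 3 * ∑' b : u, μ (ball (b : X) (rad b)) := ENNReal.tsum_mul_left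
    _ ≤ K ^ 3 * (I / lam) := mul_le_mul_right htsum _
    _ = K ^ 3 * I / lam := (mul_div_assoc _ _ _).symm

/-- On a doubling metric measure space, `(Mf)^*(t) ≤ C f^{**}(t)` for all `t > 0`
and all `f ∈ L¹ + L^∞`. -/
theorem rearrangement_maximal_le_doubleStar (X : Type) [MetricSpace X]
    [MeasurableSpace X] [BorelSpace X] (μ : Measure X)
    (Cd : ℝ≥0∞) (hCd : Cd < ⊤)
    (hdoubling : ∀ (x : X) (r : ℝ), 0 < r → μ (Metric.ball x (2 * r)) ≤ Cd * μ (Metric.ball x r)) :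
    ∃ C : ℝ≥0∞, 0 < C ∧ C < ⊤ ∧ ∀ f : X → ℝ, AEStronglyMeasurable f μ →
      (∃ g h : X → ℝ, f = g + h ∧ MemLp g 1 μ ∧ MemLp h ⊤ μ) →
      ∀ t : ℝ, 0 < t →
        decRearrangementE μ (hlMaximal μ f) t ≤ C * maxDecRearrangement μ f t := by
  classical
  set K := max Cd 1 with hKdef
  have hK1 : 1 ≤ K := le_max_right _ _
  have hKtop : K ≠ ⊤ := by
    rw [hKdef]
    exact (max_lt hCd ENNReal.one_lt_top).ne
  have hdK : ∀ (x : X) (r : ℝ), 0 < r → μ (ball x (2 * r)) ≤ K * μ (ball x r) :=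
    fun x r hr => (hdoubling x r hr).trans (mul_le_mul_left (le_max_left _ _) _)
  have hK30 : K ^ 3 ≠ 0 := by positivity
  have hK3top : K ^ 3 ≠ ⊤ := ENNReal.pow_ne_top hKtop
  refine ⟨K ^ 3 + 1, lt_of_lt_of_le zero_lt_one le_add_self, ?_, ?_⟩
  · exact ENNReal.add_lt_top.mpr ⟨hK3top.lt_top, ENNReal.one_lt_top⟩
  intro f hf _hdecomp t ht
  -- measurable version
  obtain ⟨ψ, hψm, hψae⟩ := hf.aemeasurable
  set φ : X → ℝ := fun x => |ψ x| with hφdef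
  have hφm : Measurable φ := hψm.abs
  have hφ0 : ∀ x, 0 ≤ φ x := fun x => abs_nonneg _
  set F : X → ℝ≥0∞ := fun x => ENNReal.ofReal (φ x) with hFdef
  have hFm : Measurable F := ENNReal.measurable_ofReal.comp hφm
  have hFlt : ∀ x, F x < ⊤ := fun x => ENNReal.ofReal_lt_top
  have hae : ∀ᵐ x ∂μ, (‖f x‖₊ : ℝ≥0∞) = F x := by
    filter_upwards [hψae] with x hx
    rw [← enorm_eq_nnnorm, Real.enorm_eq_ofReal_abs, hFdef, hφdef, hx]
  -- distribution function
  set d : ℝ≥0∞ → ℝ≥0∞ := fun l => μ {x | l < F x} with hddef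
  have hdmono : ∀ {l l' : ℝ≥0∞}, l ≤ l' → d l' ≤ d l :=
    fun h => measure_mono (fun x hx => lt_of_le_of_lt h hx)
  have hdeq : ∀ l, μ {x | l < (‖f x‖₊ : ℝ≥0∞)} = d l := by
    intro l
    refine measure_congr ?_
    filter_upwards [hae] with x hx
    exact congrArg (fun y => l < y) hx
  -- rearrangement
  set ρ : ℝ → ℝ≥0∞ := fun s => sInf {l | d l ≤ ENNReal.ofReal s} with hρdef
  have hρeq : ∀ s, decRearrangement μ f s = ρ s := by
    intro s
    unfold decRearrangement decRearrangementE
    simp only [hdeq]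
    rfl
  have hρanti : Antitone ρ := by
    intro s s' h
    exact sInf_le_sInf (fun l hl => hl.trans (ENNReal.ofReal_le_ofReal h))
  -- fact 2 : d (ρ s) ≤ ofReal s
  have hfact2 : ∀ s : ℝ, d (ρ s) ≤ ENNReal.ofReal s := by
    intro s
    rcases eq_or_ne (ρ s) ⊤ with htop | htop
    · have hempty : {x | ρ s < F x} = ∅ := by
        ext x; simp [htop, not_top_lt]
      show μ {x | ρ s < F x} ≤ _
      rw [hempty]; simp
    · have hcov : {x | ρ s < F x} = ⋃ n : ℕ, {x | ρ s + (n : ℝ≥0∞)⁻¹ < F x} := by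
        ext x
        simp only [mem_iUnion, mem_setOf_eq]
        constructor
        · intro hx
          obtain ⟨n, hn⟩ := ENNReal.exists_inv_nat_lt (tsub_pos_of_lt hx).ne'
          refine ⟨n, ?_⟩
          calc ρ s + (n : ℝ≥0∞)⁻¹ < ρ s + (F x - ρ s) := ENNReal.add_lt_add_left htop hn
            _ = F x := add_tsub_cancel_of_le hx.le
        · rintro ⟨n, hn⟩
          exact lt_of_le_of_lt le_self_add hn
      have hmono' : Monotone (fun n : ℕ => {x | ρ s + (n : ℝ≥0∞)⁻¹ < F x}) := by
        intro m n hmn x hx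
        simp only [mem_setOf_eq] at hx ⊢
        exact lt_of_le_of_lt
          (add_le_add_right (ENNReal.inv_le_inv.mpr (Nat.cast_le.mpr hmn)) _) hx
      show μ {x | ρ s < F x} ≤ _
      rw [hcov, Monotone.measure_iUnion hmono']
      refine iSup_le fun n => ?_
      have hlt' : ρ s < ρ s + (n : ℝ≥0∞)⁻¹ :=
        ENNReal.lt_add_right htop (by simp)
      obtain ⟨l, hlS, hl⟩ := sInf_lt_iff.mp hlt'
      refine le_trans (measure_mono fun x hx => lt_trans hl hx) hlS
  -- fact 3
  have hfact3 : ∀ (s : ℝ) (l : ℝ≥0∞), l < ρ s ↔ ENNReal.ofReal s < d l := by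
    intro s l
    rw [← not_le, ← not_le]
    apply not_congr
    constructor
    · intro h; exact le_trans (hdmono h) (hfact2 s)
    · intro h; exact sInf_le h
  set T := ENNReal.ofReal t with hTdef
  have hT0 : T ≠ 0 := by
    rw [hTdef]; simpa using ht
  have hTtop : T ≠ ⊤ := ENNReal.ofReal_ne_top
  set S := ∫⁻ s in Set.Ioo (0 : ℝ) t, ρ s with hSdef
  have hmaxeq : maxDecRearrangement μ f t = T⁻¹ * S := by
    unfold maxDecRearrangement
    rw [hSdef, hTdef]
    congr 1
    exact lintegral_congr fun s => hρeq s
  rcases eq_or_ne S ⊤ with hStop | hStop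
  · rw [hmaxeq, hStop, ENNReal.mul_top (ENNReal.inv_ne_zero.mpr hTtop),
      ENNReal.mul_top (by simp)]
    exact le_top
  set a := ρ t with hadef
  have haT : a * T ≤ S := by
    have h1 : a * T = ∫⁻ _ in Set.Ioo (0 : ℝ) t, a := by
      rw [setLIntegral_const, Real.volume_Ioo, sub_zero, hTdef]
    rw [h1, hSdef]
    refine lintegral_mono_ae ((ae_restrict_iff' measurableSet_Ioo).2 (ae_of_all _ ?_))
    intro s hs
    exact hρanti hs.2.le
  have ha : a ≤ T⁻¹ * S := by
    rw [← ENNReal.div_eq_inv_mul]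
    exact (ENNReal.le_div_iff_mul_le (Or.inl hT0) (Or.inl hTtop)).mpr haT
  have hatop : a ≠ ⊤ :=
    (ha.trans_lt (ENNReal.mul_lt_top (ENNReal.inv_lt_top.mpr (pos_iff_ne_zero.mpr hT0))
      hStop.lt_top)).ne
  rcases eq_or_ne S 0 with hS0 | hS0
  · -- f is a.e. zero; maximal function vanishes identically
    have hρ0 : ∀ s ∈ Set.Ioo (0 : ℝ) t, ρ s = 0 := by
      intro s hs
      by_contra h
      have hpos : 0 < ρ s * ENNReal.ofReal s :=
        ENNReal.mul_pos h (ENNReal.ofReal_pos.mpr hs.1).ne'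
      have hle : ρ s * ENNReal.ofReal s ≤ S := by
        have h1 : ρ s * ENNReal.ofReal s = ∫⁻ _ in Set.Ioo (0 : ℝ) s, ρ s := by
          rw [setLIntegral_const, Real.volume_Ioo, sub_zero]
        rw [h1, hSdef]
        refine le_trans ?_ (lintegral_mono_set (Set.Ioo_subset_Ioo le_rfl hs.2.le))
        refine lintegral_mono_ae ((ae_restrict_iff' measurableSet_Ioo).2 (ae_of_all _ ?_))
        intro s' hs'
        exact hρanti hs'.2.le
      rw [hS0] at hle
      exact hpos.ne' (le_antisymm hle zero_le)
    have hd0 : d 0 = 0 := by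
      have h1 : ∀ s ∈ Set.Ioo (0 : ℝ) t, d 0 ≤ ENNReal.ofReal s := by
        intro s hs
        have := hfact2 s
        rwa [hρ0 s hs] at this
      refine le_antisymm ?_ zero_le
      refine ENNReal.le_of_forall_pos_le_add fun ε hε _ => ?_
      rw [zero_add]
      calc d 0 ≤ ENNReal.ofReal (min (t / 2) ε) :=
            h1 _ ⟨lt_min (by linarith) (by exact_mod_cast hε), (min_le_left _ _).trans_lt
              (by linarith)⟩
        _ ≤ ENNReal.ofReal ε := ENNReal.ofReal_le_ofReal (min_le_right _ _)
        _ = ε := ENNReal.ofReal_coe_nnreal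
    have hF0 : ∀ᵐ x ∂μ, F x = 0 := by
      have : μ {x | F x ≠ 0} = 0 := by
        have heq : {x | F x ≠ 0} = {x | (0 : ℝ≥0∞) < F x} := by
          ext x; simp [pos_iff_ne_zero]
        rw [heq]; exact hd0
      exact this
    have hM0 : ∀ x, hlMaximal μ f x = 0 := by
      intro x
      unfold hlMaximal
      refine le_antisymm (iSup₂_le fun r hr => ?_) zero_le
      have hint : ∫⁻ y in ball x r, (‖f y‖₊ : ℝ≥0∞) ∂μ = 0 := by
        have hz : ∀ᵐ y ∂(μ.restrict (ball x r)), (‖f y‖₊ : ℝ≥0∞) = 0 := by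
          refine ae_restrict_of_ae ?_
          filter_upwards [hae, hF0] with y h1 h2
          rw [h1, h2]
        rw [lintegral_congr_ae hz, lintegral_zero]
      rw [hint, ENNReal.zero_div]
    have hLHS : decRearrangementE μ (hlMaximal μ f) t ≤ 0 := by
      refine sInf_le ?_
      have : {x | (0 : ℝ≥0∞) < hlMaximal μ f x} = ∅ := by
        ext x; simp [hM0 x]
      show μ {x | (0 : ℝ≥0∞) < hlMaximal μ f x} ≤ _
      rw [this]; simp
    exact le_trans hLHS zero_le
  -- main case
  set G : X → ℝ≥0∞ := fun x => if a < F x then F x else 0 with hGdef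
  set H : X → ℝ≥0∞ := fun x => if a < F x then 0 else F x with hHdef
  have hGm : Measurable G :=
    Measurable.ite (measurableSet_lt measurable_const hFm) hFm measurable_const
  have hGH : ∀ x, F x = G x + H x := by
    intro x
    by_cases h : a < F x <;> simp [hGdef, hHdef, h]
  have hHle : ∀ x, H x ≤ a := by
    intro x
    by_cases h : a < F x <;> simp [hHdef, h]
    exact le_of_not_gt h
  -- the layer cake bound : ∫ G ≤ S
  have hlayer : ∫⁻ x, G x ∂μ ≤ S := by
    set g : X → ℝ := fun x => if a < F x then φ x else 0 with hgdef
    have hgm : Measurable g :=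
      Measurable.ite (measurableSet_lt measurable_const hFm) hφm measurable_const
    have hg0 : 0 ≤ᵐ[μ] g := ae_of_all _ fun x => by
      by_cases h : a < F x <;> simp [hgdef, h, hφ0 x]
    have hGg : ∀ x, G x = ENNReal.ofReal (g x) := by
      intro x
      by_cases h : a < F x <;> simp [hGdef, hgdef, h]
      rfl
    have hlhs : ∫⁻ x, G x ∂μ = ∫⁻ l in Ioi (0:ℝ), μ {x | l < g x} := by
      rw [lintegral_congr hGg]
      exact lintegral_eq_lintegral_meas_lt μ hg0 hgm.aemeasurable
    have hgset : ∀ l : ℝ, 0 < l → μ {x | l < g x} = d (max a (ENNReal.ofReal l)) := by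
      intro l hl
      have : {x | l < g x} = {x | max a (ENNReal.ofReal l) < F x} := by
        ext x
        simp only [mem_setOf_eq, max_lt_iff, hgdef]
        constructor
        · intro hx
          by_cases h : a < F x
          · rw [if_pos h] at hx
            refine ⟨h, ?_⟩
            rw [hFdef]
            exact (ENNReal.ofReal_lt_ofReal_iff_of_nonneg hl.le).mpr hx
          · rw [if_neg h] at hx; linarith
        · rintro ⟨h1, h2⟩
          rw [if_pos h1]
          rw [hFdef] at h2
          exact (ENNReal.ofReal_lt_ofReal_iff_of_nonneg hl.le).mp h2
      rw [this]
    -- Tonelli computation of S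
    have hρm : Measurable ρ := hρanti.measurable
    set k : ℝ → ℝ → ℝ≥0∞ := fun s l => if ENNReal.ofReal l < ρ s then 1 else 0 with hkdef
    have hkm : Measurable (Function.uncurry k) := by
      have hset : MeasurableSet {p : ℝ × ℝ | ENNReal.ofReal p.2 < ρ p.1} :=
        measurableSet_lt (ENNReal.measurable_ofReal.comp measurable_snd)
          (hρm.comp measurable_fst)
      exact Measurable.ite hset measurable_const measurable_const
    have hinner1 : ∀ s : ℝ, ∫⁻ l in Ioi (0:ℝ), k s l = ρ s := fun s =>
      auxIndicatorIntegral (ρ s)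
    have hinner2 : ∀ l : ℝ, ∫⁻ s in Set.Ioo (0:ℝ) t, k s l
        = min T (d (ENNReal.ofReal l)) := by
      intro l
      have hms : MeasurableSet {s : ℝ | ENNReal.ofReal l < ρ s} :=
        measurableSet_lt measurable_const hρm
      have h1 : (fun s : ℝ => k s l)
          = Set.indicator {s : ℝ | ENNReal.ofReal l < ρ s} (fun _ => (1:ℝ≥0∞)) := by
        funext s; simp [hkdef, Set.indicator_apply]
      calc ∫⁻ s in Set.Ioo (0:ℝ) t, k s l
          = ∫⁻ s in {s : ℝ | ENNReal.ofReal l < ρ s}, 1 ∂(volume.restrict (Set.Ioo 0 t)) := by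
            rw [show (fun s : ℝ => k s l) = _ from h1, lintegral_indicator hms]
        _ = volume ({s : ℝ | ENNReal.ofReal l < ρ s} ∩ Set.Ioo 0 t) := by
            rw [setLIntegral_one, Measure.restrict_apply hms]
        _ = min T (d (ENNReal.ofReal l)) := by
            have hsets : {s : ℝ | ENNReal.ofReal l < ρ s} ∩ Set.Ioo 0 t
                = {s : ℝ | ENNReal.ofReal s < d (ENNReal.ofReal l)} ∩ Set.Ioo 0 t := by
              ext s
              simp only [mem_inter_iff, mem_setOf_eq, and_congr_left_iff]
              intro _
              exact hfact3 s (ENNReal.ofReal l)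
            rw [hsets]
            set D := d (ENNReal.ofReal l) with hDdef
            rcases le_or_gt T D with hTD | hTD
            · have : {s : ℝ | ENNReal.ofReal s < D} ∩ Set.Ioo 0 t = Set.Ioo 0 t := by
                refine Set.inter_eq_self_of_subset_right ?_
                intro s hs
                exact lt_of_lt_of_le (lt_of_lt_of_le
                  (by exact ENNReal.ofReal_lt_ofReal_iff_of_nonneg hs.1.le |>.mpr hs.2) hTD)
                  le_rfl
              rw [this, Real.volume_Ioo, sub_zero, min_eq_left hTD, hTdef]
            · have hDt : D ≠ ⊤ := (hTD.trans_le le_top).ne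
              have hDtoReal : D.toReal < t := by
                have := hTD
                rw [hTdef] at this
                exact (ENNReal.lt_ofReal_iff_toReal_lt hDt).mp this
              have : {s : ℝ | ENNReal.ofReal s < D} ∩ Set.Ioo 0 t = Set.Ioo 0 D.toReal := by
                ext s
                simp only [mem_inter_iff, mem_setOf_eq, mem_Ioo]
                constructor
                · rintro ⟨h1', h2', _⟩
                  exact ⟨h2', (ENNReal.ofReal_lt_iff_lt_toReal h2'.le hDt).mp h1'⟩
                · rintro ⟨h1', h2'⟩
                  exact ⟨(ENNReal.ofReal_lt_iff_lt_toReal h1'.le hDt).mpr h2',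
                    h1', h2'.trans hDtoReal⟩
              rw [this, Real.volume_Ioo, sub_zero, ENNReal.ofReal_toReal hDt,
                min_eq_right hTD.le]
    have hStonelli : S = ∫⁻ l in Ioi (0:ℝ), min T (d (ENNReal.ofReal l)) := by
      calc S = ∫⁻ s in Set.Ioo (0:ℝ) t, ∫⁻ l in Ioi (0:ℝ), k s l := by
            rw [hSdef]; exact (lintegral_congr hinner1).symm
        _ = ∫⁻ l in Ioi (0:ℝ), ∫⁻ s in Set.Ioo (0:ℝ) t, k s l :=
            lintegral_lintegral_swap hkm.aemeasurable
        _ = ∫⁻ l in Ioi (0:ℝ), min T (d (ENNReal.ofReal l)) := lintegral_congr hinner2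
    rw [hlhs, hStonelli]
    refine lintegral_mono_ae ((ae_restrict_iff' measurableSet_Ioi).2 (ae_of_all _ ?_))
    intro l hl
    rw [hgset l hl]
    refine le_min ?_ (hdmono (le_max_right _ _))
    exact le_trans (hdmono (le_max_left _ _)) (hfact2 t)
  -- maximal function bounds
  set MF : X → ℝ≥0∞ := fun x =>
    ⨆ (r : ℝ) (_ : 0 < r), (∫⁻ y in ball x r, F y ∂μ) / μ (ball x r) with hMFdef
  set MG : X → ℝ≥0∞ := fun x =>
    ⨆ (r : ℝ) (_ : 0 < r), (∫⁻ y in ball x r, G y ∂μ) / μ (ball x r) with hMGdef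
  have hMeq : hlMaximal μ f = MF := by
    funext x
    unfold hlMaximal
    refine iSup_congr fun r => iSup_congr fun _ => ?_
    congr 1
    refine lintegral_congr_ae (ae_restrict_of_ae ?_)
    filter_upwards [hae] with y hy using hy
  have hsub : ∀ x, MF x ≤ MG x + a := by
    intro x
    rw [hMFdef]
    refine iSup₂_le fun r hr => ?_
    have hsplit : ∫⁻ y in ball x r, F y ∂μ
        = (∫⁻ y in ball x r, G y ∂μ) + ∫⁻ y in ball x r, H y ∂μ := by
      rw [lintegral_congr fun y => hGH y, lintegral_add_left hGm]
    rw [hsplit, ENNReal.add_div]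
    refine add_le_add ?_ ?_
    · exact le_iSup₂_of_le r hr le_rfl
    · refine ENNReal.div_le_of_le_mul ?_
      calc ∫⁻ y in ball x r, H y ∂μ ≤ ∫⁻ _ in ball x r, a ∂μ :=
            lintegral_mono fun y => hHle y
        _ = a * μ (ball x r) := setLIntegral_const _ _
  -- weak type bound
  set lam := K ^ 3 * S / T with hlamdef
  have hlam0 : 0 < lam := ENNReal.div_pos (by
      exact fun h => hS0 (by simpa [hK30] using mul_eq_zero.mp h)) hTtop
  have hmeas : μ {x | lam + a < MF x} ≤ T := by
    have hstep1 : {x | lam + a < MF x} ⊆ {x | lam < MG x} := by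
      intro x hx
      simp only [mem_setOf_eq] at hx ⊢
      have := lt_of_lt_of_le hx (hsub x)
      exact (ENNReal.add_lt_add_iff_right hatop).mp this
    refine le_trans (measure_mono hstep1) ?_
    refine le_trans (auxWeak11 μ K hK1 hdK G hGm lam hlam0) ?_
    have h2 : K ^ 3 * (∫⁻ y, G y ∂μ) / lam ≤ K ^ 3 * S / lam := by
      gcongr
    refine le_trans h2 ?_
    have hb0 : K ^ 3 * S ≠ 0 := fun h => hS0 (by simpa [hK30] using mul_eq_zero.mp h)
    have hbt : K ^ 3 * S ≠ ⊤ := ENNReal.mul_ne_top hK3top hStop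
    rw [hlamdef, div_eq_mul_inv, ENNReal.inv_div (Or.inl hTtop) (Or.inl hT0),
      ENNReal.mul_div_cancel hb0 hbt]
  calc decRearrangementE μ (hlMaximal μ f) t ≤ lam + a := by
        refine sInf_le ?_
        show μ {x | lam + a < hlMaximal μ f x} ≤ T
        rw [hMeq]
        exact hmeas
    _ ≤ (K ^ 3 + 1) * (T⁻¹ * S) := by
        have h1 : lam ≤ K ^ 3 * (T⁻¹ * S) := by
          rw [hlamdef, mul_div_assoc, ENNReal.div_eq_inv_mul]
        have h2 : a ≤ 1 * (T⁻¹ * S) := by rw [one_mul]; exact ha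
        calc lam + a ≤ K ^ 3 * (T⁻¹ * S) + 1 * (T⁻¹ * S) := add_le_add h1 h2
          _ = (K ^ 3 + 1) * (T⁻¹ * S) := (add_mul _ _ _).symm
    _ = (K ^ 3 + 1) * maxDecRearrangement μ f t := by rw [hmaxeq]
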